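/- For 1 < a < 3, the planar region {(x,y) : |x| ≤ 1/2, |y| ≤ 1/2, 0 ≤ ax + y ≤ 1} (the projection of the t = -1/2 face of the slice of [-1/2,1/2]^4 by H : ax + y + z + t = 0) is a convex polygon with exactly 5 vertices (a pentagon). -/

import Mathlib

lemma mem_seg_affine (m b x0 x1 x : ℝ) (h0 : x0 ≤ x) (h1 : x ≤ x1) :
    ((x, m*x+b) : ℝ×ℝ) ∈ segment ℝ (x0, m*x0+b) (x1, m*x1+b) := by
  rcases eq_or_lt_of_le (h0.trans h1) with h | h
  · subst h
    have : x = x0 := le_antisymm h1 h0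
    subst this
    exact left_mem_segment ℝ _ _
  · set t := (x - x0)/(x1 - x0) with ht
    have hd : 0 < x1 - x0 := by linarith
    have ht0 : 0 ≤ t := div_nonneg (by linarith) hd.le
    have ht1 : t ≤ 1 := by rw [div_le_one hd]; linarith
    refine ⟨1 - t, t, by linarith, ht0, by ring, ?_⟩
    have hkey : t*(x1-x0) = x - x0 := div_mul_cancel₀ _ hd.ne'
    have hx : (1-t)*x0 + t*x1 = x := by linear_combination hkey
    have hy : (1-t)*(m*x0+b) + t*(m*x1+b) = m*x+b := by
      have : (1-t)*(m*x0+b) + t*(m*x1+b) = m*((1-t)*x0+t*x1)+b := by ring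
      rw [this, hx]
    simp only [Prod.smul_mk, Prod.mk_add_mk, smul_eq_mul, Prod.mk.injEq]
    exact ⟨hx, hy⟩

lemma mem_seg_horiz (c x0 x1 x : ℝ) (h0 : x0 ≤ x) (h1 : x ≤ x1) :
    ((x, c) : ℝ×ℝ) ∈ segment ℝ (x0, c) (x1, c) := by
  simpa using mem_seg_affine 0 c x0 x1 x h0 h1

lemma mem_seg_vert (x y0 y1 y : ℝ) (h0 : y0 ≤ y) (h1 : y ≤ y1) :
    ((x, y) : ℝ×ℝ) ∈ segment ℝ (x, y0) (x, y1) := by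
  rcases eq_or_lt_of_le (h0.trans h1) with h | h
  · subst h
    have : y = y0 := le_antisymm h1 h0
    subst this
    exact left_mem_segment ℝ _ _
  · set t := (y - y0)/(y1 - y0) with ht
    have hd : 0 < y1 - y0 := by linarith
    have ht0 : 0 ≤ t := div_nonneg (by linarith) hd.le
    have ht1 : t ≤ 1 := by rw [div_le_one hd]; linarith
    refine ⟨1 - t, t, by linarith, ht0, by ring, ?_⟩
    have hkey : t*(y1-y0) = y - y0 := div_mul_cancel₀ _ hd.ne'
    have hy : (1-t)*y0 + t*y1 = y := by linear_combination hkey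
    simp only [Prod.smul_mk, Prod.mk_add_mk, smul_eq_mul, Prod.mk.injEq]
    exact ⟨by ring, hy⟩

lemma tight_ge (c u v r1 r2 : ℝ) (h1 : c ≤ r1) (h2 : c ≤ r2) (hu : 0 < u) (hv : 0 < v)
    (huv : u + v = 1) (h : u*r1 + v*r2 = c) : r1 = c ∧ r2 = c := by
  have hc : u*c + v*c = c := by rw [← add_mul, huv, one_mul]
  have e1 : u*(r1-c) = 0 := le_antisymm
    (by nlinarith [mul_nonneg hv.le (sub_nonneg.mpr h2)])
    (mul_nonneg hu.le (sub_nonneg.mpr h1))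
  have e2 : v*(r2-c) = 0 := le_antisymm
    (by nlinarith [mul_nonneg hu.le (sub_nonneg.mpr h1)])
    (mul_nonneg hv.le (sub_nonneg.mpr h2))
  constructor
  · rcases mul_eq_zero.mp e1 with h' | h'
    · exact absurd h' hu.ne'
    · linarith [sub_eq_zero.mp h']
  · rcases mul_eq_zero.mp e2 with h' | h'
    · exact absurd h' hv.ne'
    · linarith [sub_eq_zero.mp h']

lemma tight_le (c u v r1 r2 : ℝ) (h1 : r1 ≤ c) (h2 : r2 ≤ c) (hu : 0 < u) (hv : 0 < v)
    (huv : u + v = 1) (h : u*r1 + v*r2 = c) : r1 = c ∧ r2 = c := by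
  have := tight_ge (-c) u v (-r1) (-r2) (by linarith) (by linarith) hu hv huv
    (by linear_combination -h)
  exact ⟨by linarith [this.1], by linarith [this.2]⟩

lemma comps {u v : ℝ} {x₁ x₂ p : ℝ×ℝ} (h : u•x₁ + v•x₂ = p) :
    u*x₁.1 + v*x₂.1 = p.1 ∧ u*x₁.2 + v*x₂.2 = p.2 := by
  constructor
  · have := congrArg Prod.fst h; simpa using this
  · have := congrArg Prod.snd h; simpa using this

set_option maxHeartbeats 2000000 in
theorem face_pentagon (a : ℝ) (ha1 : 1 < a) (ha3 : a < 3) :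
    ∃ V : Finset (ℝ × ℝ), V.card = 5 ∧
      Set.extremePoints ℝ {q : ℝ × ℝ | |q.1| ≤ 1/2 ∧ |q.2| ≤ 1/2 ∧
          0 ≤ a * q.1 + q.2 ∧ a * q.1 + q.2 ≤ 1} = ↑V ∧
      {q : ℝ × ℝ | |q.1| ≤ 1/2 ∧ |q.2| ≤ 1/2 ∧
          0 ≤ a * q.1 + q.2 ∧ a * q.1 + q.2 ≤ 1} = convexHull ℝ ↑V := by
  have ha0 : (0:ℝ) < a := by linarith
  have h2a : (0:ℝ) < 2*a := by linarith
  set S : Set (ℝ × ℝ) := {q : ℝ × ℝ | |q.1| ≤ 1/2 ∧ |q.2| ≤ 1/2 ∧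
      0 ≤ a * q.1 + q.2 ∧ a * q.1 + q.2 ≤ 1} with hSdef
  set P1 : ℝ × ℝ := (-(1/(2*a)), 1/2) with hP1
  set P2 : ℝ × ℝ := (1/(2*a), 1/2) with hP2
  set P3 : ℝ × ℝ := (1/2, 1 - a/2) with hP3
  set P4 : ℝ × ℝ := (1/2, -(1/2)) with hP4
  set P5 : ℝ × ℝ := (1/(2*a), -(1/2)) with hP5
  have hinv_pos : (0:ℝ) < 1/(2*a) := by positivity
  have hinv_lt : (1:ℝ)/(2*a) < 1/2 := by
    rw [div_lt_div_iff₀ h2a (by norm_num)]; linarith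
  have hmul : a * (1/(2*a)) = 1/2 := by field_simp
  have hmuln : a * (-(1/(2*a))) = -(1/2) := by field_simp
  have hP1S : P1 ∈ S := by
    simp only [hSdef, hP1, Set.mem_setOf_eq, abs_le]
    refine ⟨⟨?_, ?_⟩, ⟨?_, ?_⟩, ?_, ?_⟩ <;> linarith [hmul, hmuln, hinv_pos, hinv_lt]
  have hP2S : P2 ∈ S := by
    simp only [hSdef, hP2, Set.mem_setOf_eq, abs_le]
    refine ⟨⟨?_, ?_⟩, ⟨?_, ?_⟩, ?_, ?_⟩ <;> linarith [hmul, hmuln, hinv_pos, hinv_lt]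
  have hP3S : P3 ∈ S := by
    simp only [hSdef, hP3, Set.mem_setOf_eq, abs_le]
    refine ⟨⟨?_, ?_⟩, ⟨?_, ?_⟩, ?_, ?_⟩ <;> linarith [hmul, hmuln, hinv_pos, hinv_lt]
  have hP4S : P4 ∈ S := by
    simp only [hSdef, hP4, Set.mem_setOf_eq, abs_le]
    refine ⟨⟨?_, ?_⟩, ⟨?_, ?_⟩, ?_, ?_⟩ <;> linarith [hmul, hmuln, hinv_pos, hinv_lt]
  have hP5S : P5 ∈ S := by
    simp only [hSdef, hP5, Set.mem_setOf_eq, abs_le]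
    refine ⟨⟨?_, ?_⟩, ⟨?_, ?_⟩, ?_, ?_⟩ <;> linarith [hmul, hmuln, hinv_pos, hinv_lt]
  have hconv : Convex ℝ S := by
    intro p hp q hq u v hu hv huv
    simp only [hSdef, Set.mem_setOf_eq, abs_le] at hp hq ⊢
    obtain ⟨⟨h1, h2⟩, ⟨h3, h4⟩, h5, h6⟩ := hp
    obtain ⟨⟨g1, g2⟩, ⟨g3, g4⟩, g5, g6⟩ := hq
    simp only [Prod.fst_add, Prod.snd_add, Prod.smul_fst, Prod.smul_snd, smul_eq_mul]
    have m1 := mul_le_mul_of_nonneg_left h1 hu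
    have m2 := mul_le_mul_of_nonneg_left h2 hu
    have m3 := mul_le_mul_of_nonneg_left h3 hu
    have m4 := mul_le_mul_of_nonneg_left h4 hu
    have m5 := mul_le_mul_of_nonneg_left h5 hu
    have m6 := mul_le_mul_of_nonneg_left h6 hu
    have n1 := mul_le_mul_of_nonneg_left g1 hv
    have n2 := mul_le_mul_of_nonneg_left g2 hv
    have n3 := mul_le_mul_of_nonneg_left g3 hv
    have n4 := mul_le_mul_of_nonneg_left g4 hv
    have n5 := mul_le_mul_of_nonneg_left g5 hv
    have n6 := mul_le_mul_of_nonneg_left g6 hv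
    refine ⟨⟨?_, ?_⟩, ⟨?_, ?_⟩, ?_, ?_⟩ <;>
      linarith [m1, m2, m3, m4, m5, m6, n1, n2, n3, n4, n5, n6]
  have hVS : (↑({P1, P2, P3, P4, P5} : Finset (ℝ × ℝ)) : Set (ℝ × ℝ)) ⊆ S := by
    intro p hp
    simp only [Finset.coe_insert, Set.mem_insert_iff, Finset.coe_singleton,
      Set.mem_singleton_iff] at hp
    rcases hp with rfl | rfl | rfl | rfl | rfl
    exacts [hP1S, hP2S, hP3S, hP4S, hP5S]
  have hhull := convex_convexHull ℝ (↑({P1, P2, P3, P4, P5} : Finset (ℝ × ℝ)) : Set (ℝ × ℝ))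
  have hm : ∀ p ∈ ({P1, P2, P3, P4, P5} : Finset (ℝ × ℝ)),
      p ∈ convexHull ℝ (↑({P1, P2, P3, P4, P5} : Finset (ℝ × ℝ)) : Set (ℝ × ℝ)) := by
    intro p hp
    exact subset_convexHull ℝ _ (by exact_mod_cast hp)
  have hSV : S = convexHull ℝ (↑({P1, P2, P3, P4, P5} : Finset (ℝ × ℝ)) : Set (ℝ × ℝ)) := by
    apply Set.Subset.antisymm
    · rintro ⟨x, y⟩ hxy
      simp only [hSdef, Set.mem_setOf_eq, abs_le] at hxy
      obtain ⟨⟨hx1, hx2⟩, ⟨hy1, hy2⟩, hf1, hf2⟩ := hxy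
      have hx_lb : -(1/(2*a)) ≤ x := by
        have h' : a * (-(1/(2*a))) ≤ a * x := by rw [hmuln]; linarith
        exact (mul_le_mul_iff_right₀ ha0).mp h'
      by_cases hc : x ≤ 1/(2*a)
      · have hb : ((x, -a*x+0) : ℝ×ℝ) ∈
            segment ℝ (-(1/(2*a)), -a*(-(1/(2*a)))+0) (1/(2*a), -a*(1/(2*a))+0) :=
          mem_seg_affine (-a) 0 _ _ x hx_lb hc
        have e1 : -a*(-(1/(2*a)))+0 = (1/2 : ℝ) := by linear_combination hmul
        have e2 : -a*(1/(2*a))+0 = (-(1/2) : ℝ) := by linear_combination (-1 : ℝ) * hmul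
        rw [e1, e2] at hb
        have hblo : ((x, -a*x+0) : ℝ×ℝ) ∈
            convexHull ℝ (↑({P1, P2, P3, P4, P5} : Finset (ℝ × ℝ)) : Set (ℝ × ℝ)) :=
          hhull.segment_subset (hm P1 (by simp)) (hm P5 (by simp)) hb
        have ht : ((x, (1/2 : ℝ)) : ℝ×ℝ) ∈ segment ℝ (-(1/(2*a)), 1/2) (1/(2*a), 1/2) :=
          mem_seg_horiz (1/2) _ _ x hx_lb hc
        have hthi : ((x, (1/2 : ℝ)) : ℝ×ℝ) ∈
            convexHull ℝ (↑({P1, P2, P3, P4, P5} : Finset (ℝ × ℝ)) : Set (ℝ × ℝ)) :=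
          hhull.segment_subset (hm P1 (by simp)) (hm P2 (by simp)) ht
        have hmid : ((x, y) : ℝ×ℝ) ∈ segment ℝ (x, -a*x+0) (x, (1/2 : ℝ)) :=
          mem_seg_vert x _ _ y (by linarith) hy2
        exact hhull.segment_subset hblo hthi hmid
      · push_neg at hc
        have hb : ((x, (-(1/2) : ℝ)) : ℝ×ℝ) ∈ segment ℝ (1/(2*a), -(1/2)) (1/2, -(1/2)) :=
          mem_seg_horiz (-(1/2)) _ _ x hc.le hx2
        have hblo : ((x, (-(1/2) : ℝ)) : ℝ×ℝ) ∈
            convexHull ℝ (↑({P1, P2, P3, P4, P5} : Finset (ℝ × ℝ)) : Set (ℝ × ℝ)) :=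
          hhull.segment_subset (hm P5 (by simp)) (hm P4 (by simp)) hb
        have ht : ((x, -a*x+1) : ℝ×ℝ) ∈
            segment ℝ (1/(2*a), -a*(1/(2*a))+1) (1/2, -a*(1/2)+1) :=
          mem_seg_affine (-a) 1 _ _ x hc.le hx2
        have e1 : -a*(1/(2*a))+1 = (1/2 : ℝ) := by linear_combination (-1 : ℝ) * hmul
        have e2 : -a*(1/2)+1 = (1 - a/2 : ℝ) := by ring
        rw [e1, e2] at ht
        have hthi : ((x, -a*x+1) : ℝ×ℝ) ∈
            convexHull ℝ (↑({P1, P2, P3, P4, P5} : Finset (ℝ × ℝ)) : Set (ℝ × ℝ)) :=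
          hhull.segment_subset (hm P2 (by simp)) (hm P3 (by simp)) ht
        have hmid : ((x, y) : ℝ×ℝ) ∈ segment ℝ (x, (-(1/2) : ℝ)) (x, -a*x+1) :=
          mem_seg_vert x _ _ y (by linarith) (by linarith)
        exact hhull.segment_subset hblo hthi hmid
    · exact convexHull_min hVS hconv
  refine ⟨{P1, P2, P3, P4, P5}, ?_, ?_, ?_⟩
  · -- cardinality
    rw [Finset.card_insert_of_notMem, Finset.card_insert_of_notMem,
        Finset.card_insert_of_notMem, Finset.card_insert_of_notMem,
        Finset.card_singleton]
    · simp only [Finset.mem_singleton, hP4, hP5, Prod.mk.injEq, not_and]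
      intro h; linarith
    · simp only [Finset.mem_insert, Finset.mem_singleton, hP3, hP4, hP5, Prod.mk.injEq, not_or]
      refine ⟨fun h => ?_, fun h => ?_⟩ <;> [skip; skip]
      · linarith [h.2]
      · linarith [h.1]
    · simp only [Finset.mem_insert, Finset.mem_singleton, hP2, hP3, hP4, hP5,
        Prod.mk.injEq, not_or]
      refine ⟨fun h => ?_, fun h => ?_, fun h => ?_⟩
      · linarith [h.1]
      · linarith [h.1]
      · linarith [h.2]
    · simp only [Finset.mem_insert, Finset.mem_singleton, hP1, hP2, hP3, hP4, hP5,
        Prod.mk.injEq, not_or]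
      refine ⟨fun h => ?_, fun h => ?_, fun h => ?_, fun h => ?_⟩
      · linarith [h.1]
      · linarith [h.1]
      · linarith [h.1]
      · linarith [h.1]
  · -- extreme points
    apply Set.Subset.antisymm
    · rw [hSV]
      exact extremePoints_convexHull_subset
    · intro p hp
      simp only [Finset.coe_insert, Set.mem_insert_iff, Finset.coe_singleton,
        Set.mem_singleton_iff] at hp
      have hmem : ∀ x ∈ S, (-(1/2) ≤ x.1 ∧ x.1 ≤ 1/2) ∧ (-(1/2) ≤ x.2 ∧ x.2 ≤ 1/2) ∧
          0 ≤ a*x.1 + x.2 ∧ a*x.1 + x.2 ≤ 1 := by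
        intro x hx
        simp only [hSdef, Set.mem_setOf_eq, abs_le] at hx
        exact hx
      rcases hp with rfl | rfl | rfl | rfl | rfl
      · refine ⟨hP1S, ?_⟩
        rintro x₁ hx₁ x₂ hx₂ ⟨u, v, hu, hv, huv, heq⟩
        obtain ⟨hfst, hsnd⟩ := comps heq
        simp only [hP1] at hfst hsnd
        obtain ⟨⟨a1, a2⟩, ⟨b1, b2⟩, c1, c2⟩ := hmem x₁ hx₁
        obtain ⟨⟨a1', a2'⟩, ⟨b1', b2'⟩, c1', c2'⟩ := hmem x₂ hx₂
        have hsn := tight_le (1/2) u v x₁.2 x₂.2 b2 b2' hu hv huv hsnd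
        have hfun : u*(a*x₁.1 + x₁.2) + v*(a*x₂.1 + x₂.2) = 0 := by
          linear_combination a*hfst + hsnd + hmuln
        have hf := tight_ge 0 u v _ _ c1 c1' hu hv huv hfun
        have h11 : x₁.1 = -(1/(2*a)) :=
          mul_left_cancel₀ ha0.ne' (by rw [hmuln]; linarith [hf.1, hsn.1])
        have h21 : x₂.1 = -(1/(2*a)) :=
          mul_left_cancel₀ ha0.ne' (by rw [hmuln]; linarith [hf.2, hsn.2])
        exact Prod.ext_iff.mpr ⟨h11, hsn.1⟩
      · refine ⟨hP2S, ?_⟩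
        rintro x₁ hx₁ x₂ hx₂ ⟨u, v, hu, hv, huv, heq⟩
        obtain ⟨hfst, hsnd⟩ := comps heq
        simp only [hP2] at hfst hsnd
        obtain ⟨⟨a1, a2⟩, ⟨b1, b2⟩, c1, c2⟩ := hmem x₁ hx₁
        obtain ⟨⟨a1', a2'⟩, ⟨b1', b2'⟩, c1', c2'⟩ := hmem x₂ hx₂
        have hsn := tight_le (1/2) u v x₁.2 x₂.2 b2 b2' hu hv huv hsnd
        have hfun : u*(a*x₁.1 + x₁.2) + v*(a*x₂.1 + x₂.2) = 1 := by
          linear_combination a*hfst + hsnd + hmul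
        have hf := tight_le 1 u v _ _ c2 c2' hu hv huv hfun
        have h11 : x₁.1 = 1/(2*a) :=
          mul_left_cancel₀ ha0.ne' (by rw [hmul]; linarith [hf.1, hsn.1])
        have h21 : x₂.1 = 1/(2*a) :=
          mul_left_cancel₀ ha0.ne' (by rw [hmul]; linarith [hf.2, hsn.2])
        exact Prod.ext_iff.mpr ⟨h11, hsn.1⟩
      · refine ⟨hP3S, ?_⟩
        rintro x₁ hx₁ x₂ hx₂ ⟨u, v, hu, hv, huv, heq⟩
        obtain ⟨hfst, hsnd⟩ := comps heq
        simp only [hP3] at hfst hsnd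
        obtain ⟨⟨a1, a2⟩, ⟨b1, b2⟩, c1, c2⟩ := hmem x₁ hx₁
        obtain ⟨⟨a1', a2'⟩, ⟨b1', b2'⟩, c1', c2'⟩ := hmem x₂ hx₂
        have hfs := tight_le (1/2) u v x₁.1 x₂.1 a2 a2' hu hv huv hfst
        have hfun : u*(a*x₁.1 + x₁.2) + v*(a*x₂.1 + x₂.2) = 1 := by
          linear_combination a*hfst + hsnd
        have hf := tight_le 1 u v _ _ c2 c2' hu hv huv hfun
        have e1 : a * x₁.1 = a * (1/2) := by rw [hfs.1]
        have e2 : a * x₂.1 = a * (1/2) := by rw [hfs.2]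
        have h12 : x₁.2 = 1 - a/2 := by linarith [hf.1, e1]
        have h22 : x₂.2 = 1 - a/2 := by linarith [hf.2, e2]
        exact Prod.ext_iff.mpr ⟨hfs.1, h12⟩
      · refine ⟨hP4S, ?_⟩
        rintro x₁ hx₁ x₂ hx₂ ⟨u, v, hu, hv, huv, heq⟩
        obtain ⟨hfst, hsnd⟩ := comps heq
        simp only [hP4] at hfst hsnd
        obtain ⟨⟨a1, a2⟩, ⟨b1, b2⟩, c1, c2⟩ := hmem x₁ hx₁
        obtain ⟨⟨a1', a2'⟩, ⟨b1', b2'⟩, c1', c2'⟩ := hmem x₂ hx₂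
        have hfs := tight_le (1/2) u v x₁.1 x₂.1 a2 a2' hu hv huv hfst
        have hsn := tight_ge (-(1/2)) u v x₁.2 x₂.2 b1 b1' hu hv huv hsnd
        exact Prod.ext_iff.mpr ⟨hfs.1, hsn.1⟩
      · refine ⟨hP5S, ?_⟩
        rintro x₁ hx₁ x₂ hx₂ ⟨u, v, hu, hv, huv, heq⟩
        obtain ⟨hfst, hsnd⟩ := comps heq
        simp only [hP5] at hfst hsnd
        obtain ⟨⟨a1, a2⟩, ⟨b1, b2⟩, c1, c2⟩ := hmem x₁ hx₁
        obtain ⟨⟨a1', a2'⟩, ⟨b1', b2'⟩, c1', c2'⟩ := hmem x₂ hx₂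
        have hsn := tight_ge (-(1/2)) u v x₁.2 x₂.2 b1 b1' hu hv huv hsnd
        have hfun : u*(a*x₁.1 + x₁.2) + v*(a*x₂.1 + x₂.2) = 0 := by
          linear_combination a*hfst + hsnd + hmul
        have hf := tight_ge 0 u v _ _ c1 c1' hu hv huv hfun
        have h11 : x₁.1 = 1/(2*a) :=
          mul_left_cancel₀ ha0.ne' (by rw [hmul]; linarith [hf.1, hsn.1])
        have h21 : x₂.1 = 1/(2*a) :=
          mul_left_cancel₀ ha0.ne' (by rw [hmul]; linarith [hf.2, hsn.2])
        exact Prod.ext_iff.mpr ⟨h11, hsn.1⟩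
  · exact hSV
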